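/- Let n ∈ ℕ and let u = (u₁,…,uₙ), v = (v₁,…,vₙ) ∈ ℝⁿ have all components positive. Assume v₁ ≤ 1, u_i + v_{i+1} ≤ 1 for all i ∈ {1,…,n−1}, and uₙ < 1. Then w₁ > 0, …, wₙ > 0, where w₋₁ := w₀ := 1 and w_k := w_{k−1} − u_k v_k w_{k−2} for k ∈ {1,…,n}; consequently, all eigenvalues of the two-diagonal matrix A(u,v) are smaller than 1. -/

import Mathlib

open Matrix

/-- The two-diagonal matrix `A(u,v)` (0-indexed: entry `(k, k+1)` is `u k`, which is
`u_{k+1}` in the paper's 1-indexed notation, and entry `(k+1, k)` is `v k`). -/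
def twoDiag (n : ℕ) (u v : ℕ → ℝ) : Matrix (Fin (n + 1)) (Fin (n + 1)) ℝ :=
  fun i j =>
    if (j : ℕ) = (i : ℕ) + 1 then u (i : ℕ)
    else if (i : ℕ) = (j : ℕ) + 1 then v (j : ℕ) else 0

private lemma auxRec (n : ℕ) (hn : 1 ≤ n) (u v : ℕ → ℝ)
    (hu : ∀ k < n, 0 < u k) (hv : ∀ k < n, 0 < v k)
    (hv1 : v 0 ≤ 1)
    (hmid : ∀ i : ℕ, i + 1 < n → u i + v (i + 1) ≤ 1)
    (hun : u (n - 1) < 1)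
    (μ : ℝ) (hμ : 1 ≤ μ) (q : ℕ → ℝ) (hq0 : 0 < q 0) (hq1 : q 1 = μ * q 0)
    (hqrec : ∀ k, k + 2 ≤ n → q (k + 2) = μ * q (k + 1) - u k * v k * q k) :
    (∀ k < n, 0 < q (k + 1) ∧ v k * q k ≤ q (k + 1)) ∧
      0 < μ * q n - u (n - 1) * v (n - 1) * q (n - 1) := by
  have key : ∀ k < n, 0 < q (k + 1) ∧ v k * q k ≤ q (k + 1) := by
    intro k
    induction k with
    | zero =>
      intro _
      constructor
      · rw [hq1]; nlinarith
      · rw [hq1]; nlinarith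
    | succ k ih =>
      intro hk
      obtain ⟨h1, h2⟩ := ih (by omega)
      have hrec := hqrec k (by omega)
      have huk := hu k (by omega)
      have hvk1 := hv (k + 1) hk
      have hm := hmid k hk
      have hp : u k * (v k * q k) ≤ u k * q (k + 1) :=
        mul_le_mul_of_nonneg_left h2 huk.le
      constructor
      · nlinarith
      · nlinarith
  refine ⟨key, ?_⟩
  obtain ⟨h1, h2⟩ := key (n - 1) (by omega)
  have hn' : n - 1 + 1 = n := by omega
  rw [hn'] at h1 h2
  have hu' := hu (n - 1) (by omega)
  have hp : u (n - 1) * (v (n - 1) * q (n - 1)) ≤ u (n - 1) * q n :=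
    mul_le_mul_of_nonneg_left h2 hu'.le
  nlinarith

private lemma twoDiag_mulVec (n : ℕ) (u v : ℕ → ℝ) (x : Fin (n + 1) → ℝ) (i : Fin (n + 1)) :
    (twoDiag n u v *ᵥ x) i =
      (if h : (i : ℕ) + 1 ≤ n then u i * x ⟨(i : ℕ) + 1, by omega⟩ else 0) +
      (if h : 1 ≤ (i : ℕ) then v ((i : ℕ) - 1) * x ⟨(i : ℕ) - 1, by omega⟩ else 0) := by
  have hsplit : ∀ j : Fin (n + 1),
      twoDiag n u v i j * x j =
        (if (j : ℕ) = (i : ℕ) + 1 then u i * x j else 0) +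
        (if (i : ℕ) = (j : ℕ) + 1 then v (j : ℕ) * x j else 0) := by
    intro j
    simp only [twoDiag]
    split_ifs with h1 h2 <;> first | omega | ring
  have : (twoDiag n u v *ᵥ x) i = ∑ j : Fin (n + 1), twoDiag n u v i j * x j := rfl
  rw [this, Finset.sum_congr rfl fun j _ => hsplit j, Finset.sum_add_distrib]
  congr 1
  · by_cases h : (i : ℕ) + 1 ≤ n
    · rw [dif_pos h]
      rw [Finset.sum_eq_single_of_mem (⟨(i : ℕ) + 1, by omega⟩ : Fin (n + 1))
        (Finset.mem_univ _)]
      · simp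
      · intro b _ hb
        rw [if_neg]
        intro hbv
        exact hb (Fin.ext hbv)
    · rw [dif_neg h, Finset.sum_eq_zero]
      intro j _
      rw [if_neg]
      omega
  · by_cases h : 1 ≤ (i : ℕ)
    · rw [dif_pos h]
      rw [Finset.sum_eq_single_of_mem (⟨(i : ℕ) - 1, by omega⟩ : Fin (n + 1))
        (Finset.mem_univ _)]
      · rw [if_pos (by simp; omega)]
      · intro b _ hb
        rw [if_neg]
        intro hbv
        apply hb
        apply Fin.ext
        show (b : ℕ) = (i : ℕ) - 1
        omega
    · rw [dif_neg h, Finset.sum_eq_zero]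
      intro j _
      rw [if_neg]
      omega

private lemma sqrt_mul_sqrt_div {a b : ℝ} (ha : 0 < a) (hb : 0 < b) :
    Real.sqrt (a * b) * Real.sqrt (a / b) = a := by
  rw [← Real.sqrt_mul (by positivity)]
  rw [show a * b * (a / b) = a ^ 2 by field_simp]
  exact Real.sqrt_sq ha.le

private lemma sqrt_div_mul {a b : ℝ} (ha : 0 < a) (hb : 0 < b) :
    Real.sqrt (a / b) * b = Real.sqrt (a * b) := by
  rw [show a * b = a / b * b ^ 2 by field_simp]
  rw [Real.sqrt_mul (by positivity), Real.sqrt_sq hb.le]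

/-- If `v₁ ≤ 1`, `uᵢ + v_{i+1} ≤ 1` for `i ∈ {1,…,n-1}` and `uₙ < 1`
(in the paper's 1-indexed notation; here `u k = u_{k+1}`, `v k = v_{k+1}`), then
`w₁, …, wₙ > 0` (here `w (k+1)` is the paper's `w_k`, `w 0 = w 1 = 1`), and consequently
all eigenvalues of `A(u,v)` (which are real) are smaller than `1`. -/
theorem stmt1 (n : ℕ) (hn : 1 ≤ n) (u v : ℕ → ℝ)
    (hu : ∀ k < n, 0 < u k) (hv : ∀ k < n, 0 < v k)
    (hv1 : v 0 ≤ 1)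
    (hmid : ∀ i : ℕ, i + 1 < n → u i + v (i + 1) ≤ 1)
    (hun : u (n - 1) < 1)
    (w : ℕ → ℝ) (hw0 : w 0 = 1) (hw1 : w 1 = 1)
    (hwrec : ∀ k < n, w (k + 2) = w (k + 1) - u k * v k * w k) :
    (∀ k < n, 0 < w (k + 2)) ∧
    (∀ μ ∈ spectrum ℂ ((twoDiag n u v).map (fun r => (r : ℂ))), μ.im = 0 ∧ μ.re < 1) := by
  obtain ⟨m, rfl⟩ : ∃ m, n = m + 1 := ⟨n - 1, by omega⟩
  constructor
  · -- positivity of the w's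
    obtain ⟨key, hfin⟩ := auxRec (m + 1) (by omega) u v hu hv hv1 hmid hun 1 le_rfl w
      (by rw [hw0]; norm_num) (by rw [hw1, hw0]; ring)
      (fun k hk => by rw [hwrec k (by omega)]; ring)
    intro k hk
    rcases lt_or_eq_of_le (Nat.succ_le_of_lt hk) with h | h
    · exact (key (k + 1) h).1
    · have hk' : k = m := by omega
      rw [hk', hwrec m (by omega)]
      simp only [Nat.add_sub_cancel] at hfin
      linarith
  · -- the spectral statement
    intro μ hμ
    set sq : ℕ → ℝ := fun k => Real.sqrt (u k * v k) with hsq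
    set c : ℕ → ℝ := fun k => ∏ i ∈ Finset.range k, Real.sqrt (u i / v i) with hc
    have hcpos : ∀ k, k ≤ m + 1 → 0 < c k := by
      intro k hk
      simp only [hc]
      refine Finset.prod_pos fun i hi => ?_
      have hi' : i < m + 1 := by have := Finset.mem_range.mp hi; omega
      exact Real.sqrt_pos.mpr (div_pos (hu i hi') (hv i hi'))
    have hcsucc : ∀ k, c (k + 1) = c k * Real.sqrt (u k / v k) := fun k => by
      simp only [hc]; exact Finset.prod_range_succ _ _
    have hkey : ∀ i j : Fin (m + 1 + 1),
        twoDiag (m + 1) sq sq i j * c (j : ℕ) = c (i : ℕ) * twoDiag (m + 1) u v i j := by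
      intro i j
      simp only [twoDiag]
      split_ifs with h1 h2
      · have hi : (i : ℕ) < m + 1 := by have := j.isLt; omega
        rw [h1, hcsucc]
        simp only [hsq]
        linear_combination (c (i : ℕ)) * sqrt_mul_sqrt_div (hu _ hi) (hv _ hi)
      · have hj : (j : ℕ) < m + 1 := by have := i.isLt; omega
        rw [h2, hcsucc]
        simp only [hsq]
        linear_combination (-(c (j : ℕ))) * sqrt_div_mul (hu _ hj) (hv _ hj)
      · ring
    set D : Matrix (Fin (m + 1 + 1)) (Fin (m + 1 + 1)) ℂ :=
      Matrix.diagonal (fun i => (c (i : ℕ) : ℂ)) with hD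
    set Sc : Matrix (Fin (m + 1 + 1)) (Fin (m + 1 + 1)) ℂ :=
      (twoDiag (m + 1) sq sq).map (fun r => (r : ℂ)) with hSc
    set Ac : Matrix (Fin (m + 1 + 1)) (Fin (m + 1 + 1)) ℂ :=
      (twoDiag (m + 1) u v).map (fun r => (r : ℂ)) with hAc
    have hSD : Sc * D = D * Ac := by
      ext i j
      rw [hSc, hAc, hD, Matrix.mul_diagonal, Matrix.diagonal_mul]
      simp only [Matrix.map_apply]
      exact_mod_cast hkey i j
    have hherm : Sc.conjTranspose = Sc := by
      have hsymm : ∀ i j : Fin (m + 1 + 1),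
          twoDiag (m + 1) sq sq j i = twoDiag (m + 1) sq sq i j := by
        intro i j
        simp only [twoDiag]
        split_ifs <;> first | rfl | omega
      ext i j
      rw [hSc]
      simp only [Matrix.conjTranspose_apply, Matrix.map_apply, Complex.star_def,
        Complex.conj_ofReal]
      rw [hsymm]
    rw [spectrum.mem_iff] at hμ
    have halg : algebraMap ℂ (Matrix (Fin (m + 1 + 1)) (Fin (m + 1 + 1)) ℂ) μ
        = Matrix.diagonal (fun _ => μ) := rfl
    rw [halg] at hμ
    set E : Matrix (Fin (m + 1 + 1)) (Fin (m + 1 + 1)) ℂ :=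
      Matrix.diagonal (fun _ => μ) with hE
    rw [Matrix.isUnit_iff_isUnit_det, isUnit_iff_ne_zero, not_not] at hμ
    have hdetD : D.det ≠ 0 := by
      rw [hD, Matrix.det_diagonal]
      refine Finset.prod_ne_zero_iff.mpr fun i _ => ?_
      exact_mod_cast (hcpos (i : ℕ) (Nat.lt_succ_iff.mp i.isLt)).ne'
    have hED : E * D = D * E := by
      ext i j
      simp only [hE, hD, Matrix.mul_diagonal, Matrix.diagonal_mul, Matrix.diagonal_apply]
      split_ifs with h
      · rw [h, mul_comm]
      · ring
    have hdetS : (E - Sc).det = 0 := by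
      have h := congrArg Matrix.det (show (E - Sc) * D = D * (E - Ac) by
        rw [Matrix.sub_mul, Matrix.mul_sub, hSD, hED])
      rw [Matrix.det_mul, Matrix.det_mul, hμ, mul_zero] at h
      exact (mul_eq_zero.mp h).resolve_right hdetD
    obtain ⟨y, hy0, hy⟩ := Matrix.exists_mulVec_eq_zero_iff.mpr hdetS
    have hSy : Sc *ᵥ y = μ • y := by
      have h1 : E *ᵥ y - Sc *ᵥ y = 0 := by rw [← Matrix.sub_mulVec, hy]
      have h2 : E *ᵥ y = μ • y := by
        ext i
        rw [hE, Matrix.mulVec_diagonal]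
        simp
      rw [← h2]
      exact (sub_eq_zero.mp h1).symm
    have hμconj : (starRingEnd ℂ) μ = μ := by
      have ht : star y ⬝ᵥ y = ((∑ i, Complex.normSq (y i) : ℝ) : ℂ) := by
        rw [show ((∑ i, Complex.normSq (y i) : ℝ) : ℂ)
            = ∑ i, ((Complex.normSq (y i) : ℝ) : ℂ) by push_cast; rfl]
        simp only [dotProduct]
        refine Finset.sum_congr rfl fun i _ => ?_
        rw [Pi.star_apply, Complex.star_def, mul_comm, Complex.mul_conj]
      have htpos : (0 : ℝ) < ∑ i, Complex.normSq (y i) := by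
        obtain ⟨i0, hi0⟩ := Function.ne_iff.mp hy0
        exact Finset.sum_pos' (fun i _ => Complex.normSq_nonneg _)
          ⟨i0, Finset.mem_univ _, Complex.normSq_pos.mpr hi0⟩
      have htne : star y ⬝ᵥ y ≠ 0 := by
        rw [ht]; exact_mod_cast htpos.ne'
      have h1 : star y ⬝ᵥ (Sc *ᵥ y) = μ * (star y ⬝ᵥ y) := by
        rw [hSy, dotProduct_smul, smul_eq_mul]
      have h2 : star (star y ⬝ᵥ (Sc *ᵥ y)) = star y ⬝ᵥ (Sc *ᵥ y) := by
        conv_lhs => rw [← Matrix.star_dotProduct]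
        rw [Matrix.star_mulVec, hherm, ← Matrix.dotProduct_mulVec]
      have hstart : star (star y ⬝ᵥ y) = star y ⬝ᵥ y := by
        rw [ht, Complex.star_def, Complex.conj_ofReal]
      rw [h1, star_mul', hstart] at h2
      exact mul_right_cancel₀ htne h2
    have him : μ.im = 0 := Complex.conj_eq_iff_im.mp hμconj
    refine ⟨him, ?_⟩
    by_contra hcon
    push_neg at hcon
    obtain ⟨r, hμr⟩ := Complex.conj_eq_iff_real.mp hμconj
    have hre : μ.re = r := by rw [hμr]; exact Complex.ofReal_re r
    rw [hre] at hcon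
    have hmap : E - Ac = (Matrix.diagonal (fun _ : Fin (m + 1 + 1) => r)
        - twoDiag (m + 1) u v).map (fun a : ℝ => (a : ℂ)) := by
      ext i j
      rw [hE, hAc]
      simp only [Matrix.sub_apply, Matrix.map_apply, Matrix.diagonal_apply]
      split_ifs
      · rw [hμr]; push_cast; ring
      · push_cast; ring
    have hdetR : (Matrix.diagonal (fun _ : Fin (m + 1 + 1) => r)
        - twoDiag (m + 1) u v).det = 0 := by
      have h2 := RingHom.map_det Complex.ofRealHom
        (Matrix.diagonal (fun _ : Fin (m + 1 + 1) => r) - twoDiag (m + 1) u v)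
      have hcoe : ⇑Complex.ofRealHom = (fun a : ℝ => (a : ℂ)) :=
        funext fun a => Complex.ofRealHom_eq_coe a
      simp only [RingHom.mapMatrix_apply, hcoe] at h2
      rw [← hmap, hμ] at h2
      exact_mod_cast h2
    obtain ⟨x, hx0, hx⟩ := Matrix.exists_mulVec_eq_zero_iff.mpr hdetR
    have hAx : twoDiag (m + 1) u v *ᵥ x = r • x := by
      have h1 : Matrix.diagonal (fun _ : Fin (m + 1 + 1) => r) *ᵥ x
          - twoDiag (m + 1) u v *ᵥ x = 0 := by
        rw [← Matrix.sub_mulVec, hx]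
      have h2 : Matrix.diagonal (fun _ : Fin (m + 1 + 1) => r) *ᵥ x = r • x := by
        ext i
        rw [Matrix.mulVec_diagonal]
        simp
      rw [← h2]
      exact (sub_eq_zero.mp h1).symm
    set X : ℕ → ℝ := fun k => if h : k < m + 1 + 1 then x ⟨k, h⟩ else 0 with hX
    have hXval : ∀ k (h : k < m + 1 + 1), X k = x ⟨k, h⟩ := fun k h => dif_pos h
    have hrow : ∀ k (hk : k < m + 1 + 1),
        (if h : k + 1 ≤ m + 1 then u k * x ⟨k + 1, by omega⟩ else 0) +
        (if h : 1 ≤ k then v (k - 1) * x ⟨k - 1, by omega⟩ else 0) = r * x ⟨k, hk⟩ := by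
      intro k hk
      have h2 : (twoDiag (m + 1) u v *ᵥ x) ⟨k, hk⟩ = r * x ⟨k, hk⟩ := by
        rw [hAx]; simp
      rw [← h2]
      exact (twoDiag_mulVec (m + 1) u v x ⟨k, hk⟩).symm
    have row0 : u 0 * X 1 = r * X 0 := by
      have h := hrow 0 (by omega)
      rw [dif_pos (by omega : 0 + 1 ≤ m + 1), dif_neg (by omega), add_zero] at h
      rw [hXval 1 (by omega), hXval 0 (by omega)]
      exact h
    have rowMid : ∀ k, k + 2 ≤ m + 1 →
        u (k + 1) * X (k + 2) + v k * X k = r * X (k + 1) := by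
      intro k hk
      have h := hrow (k + 1) (by omega)
      rw [dif_pos (by omega : k + 1 + 1 ≤ m + 1), dif_pos (by omega : 1 ≤ k + 1)] at h
      simp only [Nat.add_sub_cancel] at h
      rw [hXval (k + 2) (by omega), hXval (k + 1) (by omega), hXval k (by omega)]
      exact h
    have rowLast : v m * X m = r * X (m + 1) := by
      have h := hrow (m + 1) (by omega)
      rw [dif_neg (by omega), dif_pos (by omega : 1 ≤ m + 1), zero_add] at h
      simp only [Nat.add_sub_cancel] at h
      rw [hXval m (by omega), hXval (m + 1) (by omega)]
      exact h
    have hX0 : X 0 ≠ 0 := by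
      intro h0
      apply hx0
      have hz : ∀ k, k ≤ m + 1 → X k = 0 := by
        intro k
        induction k using Nat.strong_induction_on with
        | _ k ih =>
          intro hk
          rcases k with _ | k
          · exact h0
          rcases k with _ | k
          · have h := row0
            rw [h0, mul_zero] at h
            exact (mul_eq_zero.mp h).resolve_left (hu 0 (by omega)).ne'
          · have h := rowMid k (by omega)
            rw [ih k (by omega) (by omega), ih (k + 1) (by omega) (by omega),
              mul_zero, mul_zero, add_zero] at h
            exact (mul_eq_zero.mp h).resolve_left (hu (k + 1) (by omega)).ne'
      funext j
      have hxj : x j = X (j : ℕ) := by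
        rw [hXval (j : ℕ) j.isLt]
      rw [Pi.zero_apply, hxj, hz (j : ℕ) (Nat.lt_succ_iff.mp j.isLt)]
    set sg : ℝ := if 0 < X 0 then 1 else -1 with hsg
    set q : ℕ → ℝ := fun k => sg * X k * ∏ i ∈ Finset.range k, u i with hq
    have hq0 : 0 < q 0 := by
      simp only [hq, Finset.range_zero, Finset.prod_empty, mul_one]
      rcases lt_or_gt_of_ne hX0 with h | h
      · rw [hsg, if_neg (by linarith)]; nlinarith
      · rw [hsg, if_pos h]; linarith
    have hq1 : q 1 = r * q 0 := by
      simp only [hq, Finset.prod_range_one, Finset.range_zero, Finset.prod_empty, mul_one]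
      linear_combination sg * row0
    have hqrec : ∀ k, k + 2 ≤ m + 1 →
        q (k + 2) = r * q (k + 1) - u k * v k * q k := by
      intro k hk
      have e := rowMid k hk
      simp only [hq, Finset.prod_range_succ]
      linear_combination (sg * ((∏ i ∈ Finset.range k, u i) * u k)) * e
    obtain ⟨-, hfin⟩ := auxRec (m + 1) (by omega) u v hu hv hv1 hmid hun r hcon
      q hq0 hq1 hqrec
    simp only [Nat.add_sub_cancel] at hfin
    have e2 : r * q (m + 1) = u m * v m * q m := by
      simp only [hq, Finset.prod_range_succ]
      linear_combination (-(sg * ((∏ i ∈ Finset.range m, u i) * u m))) * rowLast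
    linarith
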